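/- Let f : ℕ → ℕ and define g(n) = f(n) + f(n-1) for n ≥ 1 (with g(0) = f(0)). If g is of quasi-polynomial type with period 2, then f is also of quasi-polynomial type with period 2, and moreover deg f = deg g. -/

import Mathlib

open Filter Polynomial

/-- `f` is of quasi-polynomial type with period 2, witnessed by polynomials `P₀, P₁`. -/
def QP2Witness (f : ℕ → ℤ) (P₀ P₁ : Polynomial ℚ) : Prop :=
  ∀ᶠ m : ℕ in atTop, (f (2 * m) : ℚ) = P₀.eval (m : ℚ) ∧ (f (2 * m + 1) : ℚ) = P₁.eval (m : ℚ)

/-- Discrete antiderivative of a polynomial exists. -/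
lemma exists_discrete_antideriv :
    ∀ n : ℕ, ∀ R : Polynomial ℚ, R.natDegree ≤ n →
      ∃ S : Polynomial ℚ, ∀ x : ℚ, S.eval (x + 1) - S.eval x = R.eval x := by
  intro n
  induction n with
  | zero =>
    intro R hR
    obtain ⟨a, rfl⟩ := natDegree_eq_zero.mp (le_antisymm hR (Nat.zero_le _))
    exact ⟨C a * X, fun x => by simp; ring⟩
  | succ n ih =>
    intro R hR
    set c : ℚ := R.coeff (n + 1) with hc
    set T : Polynomial ℚ := C (c / (n + 2)) * X ^ (n + 2) with hT
    set D : Polynomial ℚ := C (c / (n + 2)) * ((X + 1) ^ (n + 2) - X ^ (n + 2)) with hDdef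
    have hD : ∀ x : ℚ, T.eval (x + 1) - T.eval x = D.eval x := by
      intro x; simp [hT, hDdef]; ring
    have hn2 : ((n : ℚ) + 2) ≠ 0 := by positivity
    have hcoeff : ∀ m : ℕ, n < m → (R - D).coeff m = 0 := by
      intro m hm
      have hch : ((X + 1 : Polynomial ℚ) ^ (n + 2)).coeff m = ((n + 2).choose m : ℚ) :=
        coeff_X_add_one_pow ℚ _ _
      rcases eq_or_lt_of_le (Nat.succ_le_of_lt hm) with h | h
      · -- m = n + 1
        rw [coeff_sub, hDdef, coeff_C_mul, coeff_sub, hch, coeff_X_pow, ← h]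
        have : (n + 2).choose (n + 1) = n + 2 := by
          rw [show n + 2 = (n + 1) + 1 from rfl, Nat.choose_succ_self_right]
        rw [this]
        simp only [if_neg (by omega : ¬ n + 1 = n + 2)]
        push_cast
        field_simp
        simp [hc]
      · -- n + 2 ≤ m
        have hRm : R.coeff m = 0 :=
          coeff_eq_zero_of_natDegree_lt (lt_of_le_of_lt hR h)
        rw [coeff_sub, hRm, hDdef, coeff_C_mul, coeff_sub, hch, coeff_X_pow]
        rcases eq_or_lt_of_le (show n + 2 ≤ m by omega) with h2 | h2
        · rw [← h2]; simp
        · rw [Nat.choose_eq_zero_of_lt h2]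
          simp only [if_neg (by omega : ¬ m = n + 2)]
          simp
    have hdeg : (R - D).natDegree ≤ n := natDegree_le_iff_coeff_eq_zero.mpr hcoeff
    obtain ⟨S', hS'⟩ := ih (R - D) hdeg
    refine ⟨S' + T, fun x => ?_⟩
    have h1 := hS' x
    have h2 := hD x
    simp only [eval_sub] at h1
    simp only [eval_add]
    linarith

/-- Two rational polynomials agreeing on all large naturals are equal. -/
lemma poly_eq_of_eventually_eval_eq (p q : Polynomial ℚ)
    (h : ∀ᶠ m : ℕ in atTop, p.eval (m : ℚ) = q.eval (m : ℚ)) : p = q := by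
  obtain ⟨N, hN⟩ := eventually_atTop.mp h
  have hinf : Set.Infinite {x : ℚ | (p - q).IsRoot x} := by
    apply Set.infinite_of_injective_forall_mem
      (f := fun k : ℕ => ((k + N : ℕ) : ℚ)) ?_ ?_
    · intro a b hab
      simp only [Nat.cast_inj] at hab
      omega
    · intro k
      simp only [Set.mem_setOf_eq, IsRoot, eval_sub]
      rw [hN (k + N) (by omega)]
      ring
  have := eq_zero_of_infinite_isRoot _ hinf
  exact sub_eq_zero.mp this

/-- A rational polynomial eventually nonnegative on naturals has nonnegative leading coeff. -/
lemma leadingCoeff_nonneg_of_eventually (p : Polynomial ℚ)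
    (h : ∀ᶠ m : ℕ in atTop, 0 ≤ p.eval (m : ℚ)) : 0 ≤ p.leadingCoeff := by
  by_contra hneg
  push_neg at hneg
  have hp0 : p ≠ 0 := fun h0 => by simp [h0] at hneg
  rcases le_or_gt p.degree 0 with hd | hd
  · have hnd : p.natDegree = 0 := Nat.le_zero.mp (natDegree_le_iff_degree_le.mpr hd)
    have hl : p.leadingCoeff = p.coeff 0 := by rw [leadingCoeff, hnd]
    obtain ⟨m, hm⟩ := h.exists
    have hev : p.eval (m : ℚ) = p.coeff 0 := by
      conv_lhs => rw [eq_C_of_degree_le_zero hd]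
      simp
    rw [hev] at hm
    rw [hl] at hneg
    linarith
  · have ht : Tendsto (fun x => eval x p) atTop atBot :=
      p.tendsto_atBot_of_leadingCoeff_nonpos hd hneg.le
    have ht2 : Tendsto (fun m : ℕ => eval (m : ℚ) p) atTop atBot :=
      ht.comp tendsto_natCast_atTop_atTop
    have hev : ∀ᶠ m : ℕ in atTop, eval (m : ℚ) p < 0 :=
      ht2.eventually (eventually_lt_atBot 0)
    obtain ⟨m, hm1, hm2⟩ := (h.and hev).exists
    linarith

lemma degree_comp_X_add_one (p : Polynomial ℚ) : (p.comp (X + 1)).degree = p.degree := by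
  rcases eq_or_ne p 0 with rfl | hp
  · simp
  have h1 : (p.comp (X + 1)).natDegree = p.natDegree := by
    rw [natDegree_comp, ← C_1, natDegree_X_add_C, mul_one]
  have h2 : p.comp (X + 1) ≠ 0 := by
    intro h
    have h3 : (p.comp (X + 1)).comp (X - 1) = p := by
      rw [comp_assoc]
      simp
    rw [h] at h3
    simp at h3
    exact hp h3.symm
  rw [degree_eq_natDegree hp, degree_eq_natDegree h2, h1]

lemma coeff_nonneg_of_degree_le (P : Polynomial ℚ) (n : ℕ) (hle : P.degree ≤ (n : ℕ∞))
    (hl : 0 ≤ P.leadingCoeff) : 0 ≤ P.coeff n := by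
  rcases lt_or_eq_of_le hle with h | h
  · rw [coeff_eq_zero_of_degree_lt h]
  · have : P.natDegree = n := natDegree_eq_of_degree_eq_some h
    rw [← this]
    exact hl

lemma coeff_pos_of_degree_eq (P : Polynomial ℚ) (n : ℕ) (hdeg : P.degree = (n : ℕ∞))
    (hl : 0 ≤ P.leadingCoeff) : 0 < P.coeff n := by
  have hP0 : P ≠ 0 := by
    intro h0; rw [h0, degree_zero] at hdeg; exact WithBot.bot_ne_coe hdeg
  have hnd : P.natDegree = n := natDegree_eq_of_degree_eq_some hdeg
  rw [← hnd]
  exact lt_of_le_of_ne hl (Ne.symm (by rw [← leadingCoeff]; exact leadingCoeff_ne_zero.mpr hP0))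

/-- If `g(n) = f(n) + f(n-1)` (with `g 0 = f 0`) is of quasi-polynomial type with period 2,
then so is `f`, and moreover `deg f = deg g` (degrees of the witnessing polynomials, with
the zero polynomial having degree `⊥ = -∞`). -/
theorem qp2_of_sum_consecutive (f g : ℕ → ℕ)
    (hg0 : g 0 = f 0) (hgs : ∀ n : ℕ, g (n + 1) = f (n + 1) + f n)
    (hQP : ∃ Q₀ Q₁ : Polynomial ℚ, QP2Witness (fun n => (g n : ℤ)) Q₀ Q₁) :
    (∃ P₀ P₁ : Polynomial ℚ, QP2Witness (fun n => (f n : ℤ)) P₀ P₁) ∧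
    (∀ P₀ P₁ Q₀ Q₁ : Polynomial ℚ,
      QP2Witness (fun n => (f n : ℤ)) P₀ P₁ → QP2Witness (fun n => (g n : ℤ)) Q₀ Q₁ →
      max P₀.degree P₁.degree = max Q₀.degree Q₁.degree) := by
  -- useful casts of the defining relations
  have hgq : ∀ n : ℕ, (g (n + 1) : ℚ) = (f (n + 1) : ℚ) + (f n : ℚ) := by
    intro n; exact_mod_cast congrArg (Nat.cast : ℕ → ℚ) (hgs n)
  constructor
  · -- existence
    obtain ⟨Q₀, Q₁, hQ⟩ := hQP
    obtain ⟨N, hN⟩ := eventually_atTop.mp hQ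
    obtain ⟨S, hS⟩ := exists_discrete_antideriv (Q₀.comp (X + 1) - Q₁).natDegree
      (Q₀.comp (X + 1) - Q₁) le_rfl
    have hS' : ∀ x : ℚ, S.eval (x + 1) - S.eval x = Q₀.eval (x + 1) - Q₁.eval x := by
      intro x
      have := hS x
      simpa [eval_comp] using this
    set c₀ : ℚ := (f (2 * N) : ℚ) - S.eval (N : ℚ) with hc₀
    have h0 : ∀ m : ℕ, N ≤ m → (f (2 * m) : ℚ) = S.eval (m : ℚ) + c₀ := by
      intro m hm
      induction m, hm using Nat.le_induction with
      | base => rw [hc₀]; ring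
      | succ m hm ih =>
        have hNm := hN m hm
        have hNm1 := hN (m + 1) (by omega)
        have e1 : (g (2 * (m + 1)) : ℚ) = Q₀.eval ((m : ℚ) + 1) := by
          have := hNm1.1
          push_cast at this ⊢
          convert this using 2
        have e2 : (g (2 * m + 1) : ℚ) = Q₁.eval (m : ℚ) := by
          have := hNm.2
          push_cast at this ⊢
          exact this
        have key : (f (2 * (m + 1)) : ℚ) =
            (g (2 * (m + 1)) : ℚ) - (g (2 * m + 1) : ℚ) + (f (2 * m) : ℚ) := by
          have h1 := hgq (2 * m + 1)
          have h2 := hgq (2 * m)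
          have : 2 * (m + 1) = (2 * m + 1) + 1 := by ring
          rw [this]
          rw [h1, h2]
          ring
        rw [key, e1, e2, ih]
        have := hS' (m : ℚ)
        push_cast
        linarith
    refine ⟨S + C c₀, Q₁ - (S + C c₀), ?_⟩
    rw [QP2Witness, eventually_atTop]
    refine ⟨N, fun m hm => ?_⟩
    have hf0 := h0 m hm
    have e2 : (g (2 * m + 1) : ℚ) = Q₁.eval (m : ℚ) := by
      have := (hN m hm).2
      push_cast at this ⊢
      exact this
    have hf1 : (f (2 * m + 1) : ℚ) = Q₁.eval (m : ℚ) - ((S + C c₀).eval (m : ℚ)) := by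
      have h1 := hgq (2 * m)
      rw [← e2]
      simp only [eval_add, eval_C]
      push_cast at h1 hf0 ⊢
      linarith
    constructor
    · push_cast
      simp only [eval_add, eval_C]
      push_cast at hf0
      linarith
    · push_cast
      rw [eval_sub]
      push_cast at hf1
      linarith
  · -- degrees
    intro P₀ P₁ Q₀ Q₁ hP hQ
    obtain ⟨N, hN⟩ := eventually_atTop.mp (hP.and hQ)
    -- polynomial identities
    have hq1 : Q₁ = P₀ + P₁ := by
      apply poly_eq_of_eventually_eval_eq
      rw [eventually_atTop]
      refine ⟨N, fun m hm => ?_⟩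
      obtain ⟨⟨hp0, hp1⟩, hq0, hq1⟩ := hN m hm
      have h1 := hgq (2 * m)
      rw [eval_add, ← hp0, ← hp1]
      push_cast at h1 hq1 ⊢
      linarith
    have hq0 : Q₀.comp (X + 1) = P₀.comp (X + 1) + P₁ := by
      apply poly_eq_of_eventually_eval_eq
      rw [eventually_atTop]
      refine ⟨N, fun m hm => ?_⟩
      obtain ⟨⟨hp0, hp1⟩, hq0m, hq1m⟩ := hN m hm
      obtain ⟨⟨hp0', hp1'⟩, hq0', hq1'⟩ := hN (m + 1) (by omega)
      have h1 := hgq (2 * m + 1)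
      have h2m : 2 * (m + 1) = (2 * m + 1) + 1 := by ring
      rw [h2m] at hq0' hp0'
      simp only [eval_comp, eval_add, eval_X, eval_one]
      have cast1 : ((m : ℚ) + 1) = ((m + 1 : ℕ) : ℚ) := by push_cast; ring
      rw [cast1, ← hq0', ← hp0', ← hp1]
      push_cast at h1 ⊢
      linarith
    -- nonnegativity of leading coefficients
    have hl0 : 0 ≤ P₀.leadingCoeff := by
      apply leadingCoeff_nonneg_of_eventually
      filter_upwards [hP] with m hm
      rw [← hm.1]; positivity
    have hl1 : 0 ≤ P₁.leadingCoeff := by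
      apply leadingCoeff_nonneg_of_eventually
      filter_upwards [hP] with m hm
      rw [← hm.2]; positivity
    by_cases hz : P₀ = 0 ∧ P₁ = 0
    · obtain ⟨h₀, h₁⟩ := hz
      subst h₀; subst h₁
      have hQ₁ : Q₁ = 0 := by simpa using hq1
      have hQ₀ : Q₀ = 0 := by
        have : Q₀.comp (X + 1) = 0 := by simpa using hq0
        have hd := degree_comp_X_add_one Q₀
        rw [this, degree_zero] at hd
        exact degree_eq_bot.mp hd.symm
      rw [hQ₀, hQ₁]
    · -- max degree is a natural number n
      have hne : max P₀.degree P₁.degree ≠ ⊥ := by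
        rw [Ne, max_eq_bot, degree_eq_bot, degree_eq_bot]
        exact hz
      obtain ⟨n, hn0⟩ := WithBot.ne_bot_iff_exists.mp hne
      have hn : max P₀.degree P₁.degree = (n : ℕ∞) := by exact_mod_cast hn0.symm
      have hle0 : P₀.degree ≤ (n : ℕ∞) := by rw [← hn]; exact le_max_left _ _
      have hle1 : P₁.degree ≤ (n : ℕ∞) := by rw [← hn]; exact le_max_right _ _
      have hpos : 0 < P₀.coeff n + P₁.coeff n := by
        rcases max_choice P₀.degree P₁.degree with h | h
        · have : P₀.degree = (n : ℕ∞) := by rw [← h, hn]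
          have := coeff_pos_of_degree_eq P₀ n this hl0
          have h2 := coeff_nonneg_of_degree_le P₁ n hle1 hl1
          linarith
        · have : P₁.degree = (n : ℕ∞) := by rw [← h, hn]
          have := coeff_pos_of_degree_eq P₁ n this hl1
          have h2 := coeff_nonneg_of_degree_le P₀ n hle0 hl0
          linarith
      have hdQ₁ : Q₁.degree = (n : ℕ∞) := by
        apply le_antisymm
        · rw [hq1]
          exact le_trans (degree_add_le _ _) (by rw [hn]; exact le_rfl)
        · apply le_degree_of_ne_zero
          rw [hq1, coeff_add]
          exact ne_of_gt hpos
      have hdQ₀ : Q₀.degree ≤ (n : ℕ∞) := by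
        rw [← degree_comp_X_add_one Q₀, hq0]
        refine le_trans (degree_add_le _ _) ?_
        rw [degree_comp_X_add_one, hn]
        exact le_rfl
      rw [hn, hdQ₁, max_eq_right hdQ₀]
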